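/- For all y, z ∈ D: ⟨Ay, z⟩ − ⟨y, Az⟩ = (1 − e^{−2iδ})(Δy_{−1})conj(z_{−1}) − (1 − e^{2iδ}) y_{−1} conj(Δz_{−1}) − 2i sin(2δ) ∑_{n ≤ −1} [ (∇y_n)(conj(∇z_n)) + q_n y_n conj(z_n) ] + 2i sin(2δ) ∑_{n ≥ 2} [ (∇y_n)(conj(∇z_n)) + q_n y_n conj(z_n) ], where ∇y_n = y_n − y_{n−1} and for w ∈ D one sets w₁ = w_{−1}, w₀ = (1 − e^{2iδ}) w_{−1} + e^{2iδ} w₂. In particular, if δ = 0 then A is Hermitian on D, and if δ ≠ 0 then A is not Hermitian. -/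

import Mathlib

open ComplexConjugate

/-- The index set ℤ₀ = ℤ \ {0,1} as a subtype. -/
abbrev Z0 := {n : ℤ // n ≠ 0 ∧ n ≠ 1}

noncomputable def e2 (δ : ℝ) : ℂ := Complex.exp (2 * (δ : ℂ) * Complex.I)

/-- Extension of y : ℤ → ℂ by the auxiliary values y₁ = y_{−1} and
y₀ = (1 − e^{2iδ}) y_{−1} + e^{2iδ} y₂ coming from the impulse conditions. -/
noncomputable def ext (δ : ℝ) (y : ℤ → ℂ) : ℤ → ℂ := fun n =>
  if n = 0 then (1 - e2 δ) * y (-1) + e2 δ * y 2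
  else if n = 1 then y (-1)
  else y n

/-- (Ly)_n = −Δ²y_{n−1} + q_n y_n for n ∈ ℤ₀, using the auxiliary values. -/
noncomputable def Lop (δ : ℝ) (q : ℤ → ℝ) (y : ℤ → ℂ) (n : ℤ) : ℂ :=
  -(ext δ y (n + 1) - 2 * ext δ y n + ext δ y (n - 1)) + (q n : ℂ) * y n

/-- Membership in the domain D = { y ∈ l₀² : (qₙ yₙ) ∈ l₀² }. -/
def MemD (q : ℤ → ℝ) (y : ℤ → ℂ) : Prop :=
  Summable (fun n : Z0 => ‖y (n : ℤ)‖ ^ 2) ∧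
  Summable (fun n : Z0 => ‖(q (n : ℤ) : ℂ) * y (n : ℤ)‖ ^ 2)


/-- ρ_n = e^{2iδ} for n ≤ −1 and ρ_n = e^{−2iδ} for n ≥ 2 (value at n = 0, 1 immaterial). -/
noncomputable def rho (δ : ℝ) (n : ℤ) : ℂ :=
  if n ≤ -1 then e2 δ else Complex.exp (-(2 * (δ : ℂ)) * Complex.I)

/-- (Ay)_n = conj(ρ_n) (Ly)_n, i.e. A = M⁻¹L with (My)_n = ρ_n y_n (|ρ_n| = 1). -/
noncomputable def Aop (δ : ℝ) (q : ℤ → ℝ) (y : ℤ → ℂ) (n : ℤ) : ℂ :=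
  conj (rho δ n) * Lop δ q y n

lemma ext_eq (δ : ℝ) (y : ℤ → ℂ) {n : ℤ} (h0 : n ≠ 0) (h1 : n ≠ 1) : ext δ y n = y n := by
  simp [ext, h0, h1]

lemma conj_e2 (δ : ℝ) : conj (e2 δ) = Complex.exp (-(2 * (δ:ℂ)) * Complex.I) := by
  rw [e2, ← Complex.exp_conj]
  congr 1
  simp only [map_mul, Complex.conj_ofReal, Complex.conj_I, map_ofNat]
  ring

lemma conj_em2 (δ : ℝ) : conj (Complex.exp (-(2 * (δ:ℂ)) * Complex.I)) = e2 δ := by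
  rw [← conj_e2, Complex.conj_conj]

lemma e2_mul (δ : ℝ) : e2 δ * Complex.exp (-(2 * (δ:ℂ)) * Complex.I) = 1 := by
  rw [e2, ← Complex.exp_add, ← Complex.exp_zero]
  congr 1
  ring

lemma em2_eq_inv (δ : ℝ) : Complex.exp (-(2 * (δ:ℂ)) * Complex.I) = (e2 δ)⁻¹ := by
  rw [e2, ← Complex.exp_neg]
  congr 1
  ring

lemma two_I_sin (δ : ℝ) :
    2 * Complex.I * ((Real.sin (2 * δ) : ℝ) : ℂ) = e2 δ - Complex.exp (-(2 * (δ:ℂ)) * Complex.I) := by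
  rw [Complex.ofReal_sin, Complex.sin, e2]
  have h : ((2 * δ : ℝ) : ℂ) = 2 * (δ:ℂ) := by push_cast; ring
  rw [h]
  linear_combination (Complex.exp (-(2 * (δ:ℂ)) * Complex.I) - Complex.exp (2 * (δ:ℂ) * Complex.I)) * Complex.I_sq

lemma sum_mul_of_sq {f g : ℕ → ℂ} (hf : Summable fun k => ‖f k‖^2)
    (hg : Summable fun k => ‖g k‖^2) : Summable fun k => f k * g k := by
  have hb : Summable (fun k => (‖f k‖^2 + ‖g k‖^2) / 2) := (hf.add hg).div_const 2
  refine Summable.of_norm (hb.of_nonneg_of_le (fun k => norm_nonneg _) (fun k => ?_))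
  rw [norm_mul]
  nlinarith [norm_nonneg (f k), norm_nonneg (g k), sq_nonneg (‖f k‖ - ‖g k‖)]

lemma sum_mul_shift {f g : ℕ → ℂ} (hf : Summable fun k => ‖f k‖^2)
    (hg : Summable fun k => ‖g k‖^2) (i j : ℕ) : Summable fun k => f (k+i) * g (k+j) := by
  have h1 : Summable fun k => ‖f (k+i)‖^2 :=
    (summable_nat_add_iff (f := fun k => ‖f k‖^2) i).2 hf
  have h2 : Summable fun k => ‖g (k+j)‖^2 :=
    (summable_nat_add_iff (f := fun k => ‖g k‖^2) j).2 hg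
  exact sum_mul_of_sq h1 h2

lemma hasSum_tel {Φ : ℕ → ℂ} (h : Summable Φ) : HasSum (fun k => Φ (k+1) - Φ k) (-Φ 0) := by
  have h0 : HasSum Φ (∑' k, Φ k) := h.hasSum
  have h1 : HasSum (fun k => Φ (k+1)) ((∑' k, Φ k) - Φ 0) := by
    refine (hasSum_nat_add_iff 1).2 ?_
    simpa using h0
  simpa using h1.sub h0

lemma neg_half (bb aa : ℂ) (P W Q : ℕ → ℂ)
    (hP : Summable fun k => ‖P k‖^2) (hW : Summable fun k => ‖W k‖^2)
    (hQP : Summable fun k => ‖Q (k+1) * P (k+1)‖^2) :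
    Summable (fun k => (P (k+1) - P (k+2)) * (W (k+1) - W (k+2)) + Q (k+1) * P (k+1) * W (k+1))
    ∧ Summable (fun k => bb * (-(P k - 2 * P (k+1) + P (k+2)) + Q (k+1) * P (k+1)) * W (k+1))
    ∧ Summable (fun k => aa * P (k+1) * (-(W k - 2 * W (k+1) + W (k+2)) + Q (k+1) * W (k+1)))
    ∧ HasSum (fun k => bb * (-(P k - 2 * P (k+1) + P (k+2)) + Q (k+1) * P (k+1)) * W (k+1)
        - aa * P (k+1) * (-(W k - 2 * W (k+1) + W (k+2)) + Q (k+1) * W (k+1)))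
      ((bb - aa) * (∑' k, ((P (k+1) - P (k+2)) * (W (k+1) - W (k+2)) + Q (k+1) * P (k+1) * W (k+1)))
        - (((bb - aa)/2) * ((P 0 - P 1) * W 1 + P 1 * (W 0 - W 1))
            + ((aa + bb)/2) * (P 0 * W 1 - P 1 * W 0))) := by
  have m : ∀ i j : ℕ, Summable fun k => P (k+i) * W (k+j) := fun i j => sum_mul_shift hP hW i j
  have hQW : Summable fun k => Q (k+1) * P (k+1) * W (k+1) := by
    have h2 : Summable fun k => ‖W (k+1)‖^2 :=
      (summable_nat_add_iff (f := fun k => ‖W k‖^2) 1).2 hW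
    exact (sum_mul_of_sq hQP h2).congr (fun k => by ring)
  have hH : Summable (fun k => (P (k+1) - P (k+2)) * (W (k+1) - W (k+2))
      + Q (k+1) * P (k+1) * W (k+1)) := by
    have := ((((m 1 1).sub (m 1 2)).sub ((m 2 1).sub (m 2 2))).add hQW)
    exact this.congr (fun k => by ring)
  set Φ : ℕ → ℂ := fun j => ((bb - aa)/2) * ((P j - P (j+1)) * W (j+1) + P (j+1) * (W j - W (j+1)))
      + ((aa + bb)/2) * (P j * W (j+1) - P (j+1) * W j) with hPhi
  have hΦ : Summable Φ := by
    have := ((((m 0 1).sub (m 1 1)).add ((m 1 0).sub (m 1 1))).mul_left ((bb-aa)/2)).add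
      (((m 0 1).sub (m 1 0)).mul_left ((aa+bb)/2))
    refine this.congr (fun k => ?_)
    simp only [hPhi, Nat.add_zero]
    ring
  have hS1 : Summable (fun k => bb * (-(P k - 2 * P (k+1) + P (k+2)) + Q (k+1) * P (k+1)) * W (k+1)) := by
    have := ((((m 0 1).sub ((m 1 1).mul_left 2)).add (m 2 1)).neg.add hQW).mul_left bb
    refine this.congr (fun k => ?_)
    simp only [Nat.add_zero]
    ring
  have hS2 : Summable (fun k => aa * P (k+1) * (-(W k - 2 * W (k+1) + W (k+2)) + Q (k+1) * W (k+1))) := by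
    have := ((((m 1 0).sub ((m 1 1).mul_left 2)).add (m 1 2)).neg.add hQW).mul_left aa
    refine this.congr (fun k => ?_)
    simp only [Nat.add_zero]
    ring
  refine ⟨hH, hS1, hS2, ?_⟩
  have htel : HasSum (fun k => Φ (k+1) - Φ k) (-Φ 0) := hasSum_tel hΦ
  have hsum := (hH.hasSum.mul_left (bb - aa)).add htel
  have hkey : (fun k => bb * (-(P k - 2 * P (k+1) + P (k+2)) + Q (k+1) * P (k+1)) * W (k+1)
      - aa * P (k+1) * (-(W k - 2 * W (k+1) + W (k+2)) + Q (k+1) * W (k+1)))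
      = fun k => (bb - aa) * ((P (k+1) - P (k+2)) * (W (k+1) - W (k+2)) + Q (k+1) * P (k+1) * W (k+1))
          + (Φ (k+1) - Φ k) := by
    funext k
    simp only [hPhi]
    ring
  rw [hkey]
  convert hsum using 1 <;> first | rfl | (simp only [hPhi]; ring)

lemma pos_half (aa bb : ℂ) (P W Q : ℕ → ℂ)
    (hP : Summable fun k => ‖P k‖^2) (hW : Summable fun k => ‖W k‖^2)
    (hQP : Summable fun k => ‖Q (k+1) * P (k+1)‖^2) :
    Summable (fun k => (P (k+1) - P k) * (W (k+1) - W k) + Q (k+1) * P (k+1) * W (k+1))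
    ∧ Summable (fun k => aa * (-(P (k+2) - 2 * P (k+1) + P k) + Q (k+1) * P (k+1)) * W (k+1))
    ∧ Summable (fun k => bb * P (k+1) * (-(W (k+2) - 2 * W (k+1) + W k) + Q (k+1) * W (k+1)))
    ∧ HasSum (fun k => aa * (-(P (k+2) - 2 * P (k+1) + P k) + Q (k+1) * P (k+1)) * W (k+1)
        - bb * P (k+1) * (-(W (k+2) - 2 * W (k+1) + W k) + Q (k+1) * W (k+1)))
      ((aa - bb) * (∑' k, ((P (k+1) - P k) * (W (k+1) - W k) + Q (k+1) * P (k+1) * W (k+1)))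
        + (((aa - bb)/2) * ((P 1 - P 0) * W 0 + P 0 * (W 1 - W 0))
            + ((aa + bb)/2) * (P 1 * W 0 - P 0 * W 1))) := by
  have m : ∀ i j : ℕ, Summable fun k => P (k+i) * W (k+j) := fun i j => sum_mul_shift hP hW i j
  have hQW : Summable fun k => Q (k+1) * P (k+1) * W (k+1) := by
    have h2 : Summable fun k => ‖W (k+1)‖^2 :=
      (summable_nat_add_iff (f := fun k => ‖W k‖^2) 1).2 hW
    exact (sum_mul_of_sq hQP h2).congr (fun k => by ring)
  have hH : Summable (fun k => (P (k+1) - P k) * (W (k+1) - W k)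
      + Q (k+1) * P (k+1) * W (k+1)) := by
    have := ((((m 1 1).sub (m 1 0)).sub ((m 0 1).sub (m 0 0))).add hQW)
    refine this.congr (fun k => ?_)
    simp only [Nat.add_zero]
    ring
  set Ψ : ℕ → ℂ := fun j => ((aa - bb)/2) * ((P (j+1) - P j) * W j + P j * (W (j+1) - W j))
      + ((aa + bb)/2) * (P (j+1) * W j - P j * W (j+1)) with hPsi
  have hΨ : Summable Ψ := by
    have := ((((m 1 0).sub (m 0 0)).add ((m 0 1).sub (m 0 0))).mul_left ((aa-bb)/2)).add
      (((m 1 0).sub (m 0 1)).mul_left ((aa+bb)/2))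
    refine this.congr (fun k => ?_)
    simp only [hPsi, Nat.add_zero]
    ring
  have hS1 : Summable (fun k => aa * (-(P (k+2) - 2 * P (k+1) + P k) + Q (k+1) * P (k+1)) * W (k+1)) := by
    have := ((((m 2 1).sub ((m 1 1).mul_left 2)).add (m 0 1)).neg.add hQW).mul_left aa
    refine this.congr (fun k => ?_)
    simp only [Nat.add_zero]
    ring
  have hS2 : Summable (fun k => bb * P (k+1) * (-(W (k+2) - 2 * W (k+1) + W k) + Q (k+1) * W (k+1))) := by
    have := ((((m 1 2).sub ((m 1 1).mul_left 2)).add (m 1 0)).neg.add hQW).mul_left bb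
    refine this.congr (fun k => ?_)
    simp only [Nat.add_zero]
    ring
  refine ⟨hH, hS1, hS2, ?_⟩
  have htel : HasSum (fun k => Ψ k - Ψ (k+1)) (Ψ 0) := by
    have h := (hasSum_tel hΨ).neg
    have hk : (fun k => -(Ψ (k+1) - Ψ k)) = fun k => Ψ k - Ψ (k+1) := funext fun k => by ring
    rw [hk] at h
    simpa using h
  have hsum := (hH.hasSum.mul_left (aa - bb)).add htel
  have hkey : (fun k => aa * (-(P (k+2) - 2 * P (k+1) + P k) + Q (k+1) * P (k+1)) * W (k+1)
      - bb * P (k+1) * (-(W (k+2) - 2 * W (k+1) + W k) + Q (k+1) * W (k+1)))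
      = fun k => (aa - bb) * ((P (k+1) - P k) * (W (k+1) - W k) + Q (k+1) * P (k+1) * W (k+1))
          + (Ψ k - Ψ (k+1)) := by
    funext k
    simp only [hPsi]
    ring
  rw [hkey]
  convert hsum using 1

def SnegSet : Set Z0 := {n | (n : ℤ) ≤ -1}

def eSneg : ℕ ≃ ↥SnegSet where
  toFun k := ⟨⟨-1 - (k:ℤ), by constructor <;> omega⟩, by show (-1 - (k:ℤ)) ≤ -1; omega⟩
  invFun n := (-1 - ((n : Z0) : ℤ)).toNat
  left_inv k := by simp
  right_inv n := by
    obtain ⟨⟨m, hm⟩, hmem⟩ := n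
    have h : m ≤ -1 := hmem
    apply Subtype.ext
    apply Subtype.ext
    show -1 - ((-1 - m).toNat : ℤ) = m
    omega

def eSpos : ℕ ≃ ↥(SnegSetᶜ) where
  toFun k := ⟨⟨(k:ℤ) + 2, by constructor <;> omega⟩, by
    show ¬ ((k:ℤ) + 2 ≤ -1); omega⟩
  invFun n := (((n : Z0) : ℤ) - 2).toNat
  left_inv k := by simp
  right_inv n := by
    obtain ⟨⟨m, hm0, hm1⟩, hmem⟩ := n
    have h : ¬ (m ≤ -1) := hmem
    apply Subtype.ext
    apply Subtype.ext
    show (((m - 2).toNat : ℤ)) + 2 = m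
    omega

def eNegAll : ℕ ≃ {m : ℤ // m ≤ -1} where
  toFun k := ⟨-1 - (k:ℤ), by omega⟩
  invFun n := (-1 - (n : ℤ)).toNat
  left_inv k := by simp
  right_inv n := by
    obtain ⟨m, hm⟩ := n
    apply Subtype.ext
    show -1 - ((-1 - m).toNat : ℤ) = m
    omega

def ePosAll : ℕ ≃ {m : ℤ // 2 ≤ m} where
  toFun k := ⟨(k:ℤ) + 2, by omega⟩
  invFun n := ((n : ℤ) - 2).toNat
  left_inv k := by simp
  right_inv n := by
    obtain ⟨m, hm⟩ := n
    apply Subtype.ext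
    show (((m - 2).toNat : ℤ)) + 2 = m
    omega

lemma FnegA_eq (δ : ℝ) (q : ℤ → ℝ) (y z : ℤ → ℂ) (k : ℕ) :
    Aop δ q y (-1 - (k:ℤ)) * conj (z (-1 - (k:ℤ)))
      = Complex.exp (-(2 * (δ:ℂ)) * Complex.I) *
          (-(ext δ y (-((k:ℕ):ℤ)) - 2 * ext δ y (-(((k+1:ℕ)):ℤ)) + ext δ y (-(((k+2:ℕ)):ℤ)))
            + ((q (-(((k+1:ℕ)):ℤ)) : ℝ) : ℂ) * ext δ y (-(((k+1:ℕ)):ℤ)))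
          * conj (ext δ z (-(((k+1:ℕ)):ℤ))) := by
  have h0 : (-((k:ℕ):ℤ)) = -1 - (k:ℤ) + 1 := by push_cast; ring
  have h1 : (-(((k+1:ℕ)):ℤ)) = -1 - (k:ℤ) := by push_cast; ring
  have h2 : (-(((k+2:ℕ)):ℤ)) = -1 - (k:ℤ) - 1 := by push_cast; ring
  simp only [Aop, Lop, rho]
  rw [if_pos (show -1 - (k:ℤ) ≤ -1 by omega), conj_e2, h0, h1, h2,
    ext_eq δ y (show -1-(k:ℤ) ≠ 0 by omega) (show -1-(k:ℤ) ≠ 1 by omega),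
    ext_eq δ z (show -1-(k:ℤ) ≠ 0 by omega) (show -1-(k:ℤ) ≠ 1 by omega)]

lemma FnegB_eq (δ : ℝ) (q : ℤ → ℝ) (y z : ℤ → ℂ) (k : ℕ) :
    y (-1 - (k:ℤ)) * conj (Aop δ q z (-1 - (k:ℤ)))
      = e2 δ * ext δ y (-(((k+1:ℕ)):ℤ)) *
          (-(conj (ext δ z (-((k:ℕ):ℤ))) - 2 * conj (ext δ z (-(((k+1:ℕ)):ℤ)))
              + conj (ext δ z (-(((k+2:ℕ)):ℤ))))
            + ((q (-(((k+1:ℕ)):ℤ)) : ℝ) : ℂ) * conj (ext δ z (-(((k+1:ℕ)):ℤ)))) := by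
  have h0 : (-((k:ℕ):ℤ)) = -1 - (k:ℤ) + 1 := by push_cast; ring
  have h1 : (-(((k+1:ℕ)):ℤ)) = -1 - (k:ℤ) := by push_cast; ring
  have h2 : (-(((k+2:ℕ)):ℤ)) = -1 - (k:ℤ) - 1 := by push_cast; ring
  simp only [Aop, Lop, rho, map_mul, map_add, map_neg, map_sub, map_ofNat,
    Complex.conj_conj, Complex.conj_ofReal]
  rw [if_pos (show -1 - (k:ℤ) ≤ -1 by omega), h0, h1, h2,
    ext_eq δ y (show -1-(k:ℤ) ≠ 0 by omega) (show -1-(k:ℤ) ≠ 1 by omega),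
    ext_eq δ z (show -1-(k:ℤ) ≠ 0 by omega) (show -1-(k:ℤ) ≠ 1 by omega)]
  ring

lemma FposA_eq (δ : ℝ) (q : ℤ → ℝ) (y z : ℤ → ℂ) (k : ℕ) :
    Aop δ q y ((k:ℤ) + 2) * conj (z ((k:ℤ) + 2))
      = e2 δ *
          (-(ext δ y ((((k+2:ℕ)):ℤ) + 1) - 2 * ext δ y ((((k+1:ℕ)):ℤ) + 1)
              + ext δ y (((k:ℕ):ℤ) + 1))
            + ((q ((((k+1:ℕ)):ℤ) + 1) : ℝ) : ℂ) * ext δ y ((((k+1:ℕ)):ℤ) + 1))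
          * conj (ext δ z ((((k+1:ℕ)):ℤ) + 1)) := by
  have h0 : (((k:ℕ):ℤ) + 1) = (k:ℤ) + 2 - 1 := by push_cast; ring
  have h1 : ((((k+1:ℕ)):ℤ) + 1) = (k:ℤ) + 2 := by push_cast; ring
  have h2 : ((((k+2:ℕ)):ℤ) + 1) = (k:ℤ) + 2 + 1 := by push_cast; ring
  simp only [Aop, Lop, rho]
  rw [if_neg (show ¬ ((k:ℤ) + 2 ≤ -1) by omega), conj_em2, h0, h1, h2,
    ext_eq δ y (show (k:ℤ)+2 ≠ 0 by omega) (show (k:ℤ)+2 ≠ 1 by omega),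
    ext_eq δ z (show (k:ℤ)+2 ≠ 0 by omega) (show (k:ℤ)+2 ≠ 1 by omega)]

lemma FposB_eq (δ : ℝ) (q : ℤ → ℝ) (y z : ℤ → ℂ) (k : ℕ) :
    y ((k:ℤ) + 2) * conj (Aop δ q z ((k:ℤ) + 2))
      = Complex.exp (-(2 * (δ:ℂ)) * Complex.I) * ext δ y ((((k+1:ℕ)):ℤ) + 1) *
          (-(conj (ext δ z ((((k+2:ℕ)):ℤ) + 1)) - 2 * conj (ext δ z ((((k+1:ℕ)):ℤ) + 1))
              + conj (ext δ z (((k:ℕ):ℤ) + 1)))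
            + ((q ((((k+1:ℕ)):ℤ) + 1) : ℝ) : ℂ) * conj (ext δ z ((((k+1:ℕ)):ℤ) + 1))) := by
  have h0 : (((k:ℕ):ℤ) + 1) = (k:ℤ) + 2 - 1 := by push_cast; ring
  have h1 : ((((k+1:ℕ)):ℤ) + 1) = (k:ℤ) + 2 := by push_cast; ring
  have h2 : ((((k+2:ℕ)):ℤ) + 1) = (k:ℤ) + 2 + 1 := by push_cast; ring
  simp only [Aop, Lop, rho, map_mul, map_add, map_neg, map_sub, map_ofNat,
    Complex.conj_conj, Complex.conj_ofReal]
  rw [if_neg (show ¬ ((k:ℤ) + 2 ≤ -1) by omega), h0, h1, h2,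
    ext_eq δ y (show (k:ℤ)+2 ≠ 0 by omega) (show (k:ℤ)+2 ≠ 1 by omega),
    ext_eq δ z (show (k:ℤ)+2 ≠ 0 by omega) (show (k:ℤ)+2 ≠ 1 by omega)]
  ring

lemma Hneg_eq (δ : ℝ) (q : ℤ → ℝ) (y z : ℤ → ℂ) (k : ℕ) :
    (y (-1 - (k:ℤ)) - y (-1 - (k:ℤ) - 1)) * conj (z (-1 - (k:ℤ)) - z (-1 - (k:ℤ) - 1))
        + ((q (-1 - (k:ℤ)) : ℝ) : ℂ) * y (-1 - (k:ℤ)) * conj (z (-1 - (k:ℤ)))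
      = (ext δ y (-(((k+1:ℕ)):ℤ)) - ext δ y (-(((k+2:ℕ)):ℤ)))
          * (conj (ext δ z (-(((k+1:ℕ)):ℤ))) - conj (ext δ z (-(((k+2:ℕ)):ℤ))))
        + ((q (-(((k+1:ℕ)):ℤ)) : ℝ) : ℂ) * ext δ y (-(((k+1:ℕ)):ℤ))
          * conj (ext δ z (-(((k+1:ℕ)):ℤ))) := by
  have h1 : (-(((k+1:ℕ)):ℤ)) = -1 - (k:ℤ) := by push_cast; ring
  have h2 : (-(((k+2:ℕ)):ℤ)) = -1 - (k:ℤ) - 1 := by push_cast; ring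
  rw [h1, h2, ← map_sub,
    ext_eq δ y (show -1-(k:ℤ) ≠ 0 by omega) (show -1-(k:ℤ) ≠ 1 by omega),
    ext_eq δ z (show -1-(k:ℤ) ≠ 0 by omega) (show -1-(k:ℤ) ≠ 1 by omega),
    ext_eq δ y (show -1-(k:ℤ)-1 ≠ 0 by omega) (show -1-(k:ℤ)-1 ≠ 1 by omega),
    ext_eq δ z (show -1-(k:ℤ)-1 ≠ 0 by omega) (show -1-(k:ℤ)-1 ≠ 1 by omega)]

lemma Hpos_eq (δ : ℝ) (q : ℤ → ℝ) (y z : ℤ → ℂ) (k : ℕ) :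
    (ext δ y ((k:ℤ) + 2) - ext δ y ((k:ℤ) + 2 - 1)) * conj (ext δ z ((k:ℤ) + 2) - ext δ z ((k:ℤ) + 2 - 1))
        + ((q ((k:ℤ) + 2) : ℝ) : ℂ) * y ((k:ℤ) + 2) * conj (z ((k:ℤ) + 2))
      = (ext δ y ((((k+1:ℕ)):ℤ) + 1) - ext δ y (((k:ℕ):ℤ) + 1))
          * (conj (ext δ z ((((k+1:ℕ)):ℤ) + 1)) - conj (ext δ z (((k:ℕ):ℤ) + 1)))
        + ((q ((((k+1:ℕ)):ℤ) + 1) : ℝ) : ℂ) * ext δ y ((((k+1:ℕ)):ℤ) + 1)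
          * conj (ext δ z ((((k+1:ℕ)):ℤ) + 1)) := by
  have h0 : (((k:ℕ):ℤ) + 1) = (k:ℤ) + 2 - 1 := by push_cast; ring
  have h1 : ((((k+1:ℕ)):ℤ) + 1) = (k:ℤ) + 2 := by push_cast; ring
  rw [h0, h1, ← map_sub,
    ext_eq δ y (show (k:ℤ)+2 ≠ 0 by omega) (show (k:ℤ)+2 ≠ 1 by omega),
    ext_eq δ z (show (k:ℤ)+2 ≠ 0 by omega) (show (k:ℤ)+2 ≠ 1 by omega)]

set_option maxHeartbeats 1600000 in
lemma main_formula (δ : ℝ) (q : ℤ → ℝ) (y z : ℤ → ℂ) (hy : MemD q y) (hz : MemD q z) :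
    ((∑' n : Z0, Aop δ q y (n : ℤ) * conj (z (n : ℤ))) -
        ∑' n : Z0, y (n : ℤ) * conj (Aop δ q z (n : ℤ))) =
      (1 - Complex.exp (-(2 * (δ : ℂ)) * Complex.I)) * (ext δ y 0 - y (-1)) * conj (z (-1)) -
        (1 - e2 δ) * y (-1) * conj (ext δ z 0 - z (-1)) -
        2 * Complex.I * (Real.sin (2 * δ) : ℂ) *
          (∑' n : {m : ℤ // m ≤ -1},
            ((y (n : ℤ) - y ((n : ℤ) - 1)) * conj (z (n : ℤ) - z ((n : ℤ) - 1)) +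
              (q (n : ℤ) : ℂ) * y (n : ℤ) * conj (z (n : ℤ)))) +
        2 * Complex.I * (Real.sin (2 * δ) : ℂ) *
          (∑' n : {m : ℤ // 2 ≤ m},
            ((ext δ y (n : ℤ) - ext δ y ((n : ℤ) - 1)) *
                conj (ext δ z (n : ℤ) - ext δ z ((n : ℤ) - 1)) +
              (q (n : ℤ) : ℂ) * y (n : ℤ) * conj (z (n : ℤ)))) := by
  classical
  -- summability of reindexed sequences
  have key : ∀ (w : ℤ → ℂ), Summable (fun n : Z0 => ‖w (n : ℤ)‖^2) →
      (Summable fun k : ℕ => ‖w (-1 - (k:ℤ))‖^2) ∧ (Summable fun k : ℕ => ‖w ((k:ℤ) + 2)‖^2) := by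
    intro w hw
    constructor
    · have hinj : Function.Injective (fun k : ℕ => (⟨-1 - (k:ℤ), by constructor <;> omega⟩ : Z0)) := by
        intro a b hab
        have := congrArg (fun t : Z0 => (t : ℤ)) hab
        simp only at this
        omega
      exact (hw.comp_injective hinj).congr (fun k => rfl)
    · have hinj : Function.Injective (fun k : ℕ => (⟨(k:ℤ) + 2, by constructor <;> omega⟩ : Z0)) := by
        intro a b hab
        have := congrArg (fun t : Z0 => (t : ℤ)) hab
        simp only at this
        omega
      exact (hw.comp_injective hinj).congr (fun k => rfl)
  obtain ⟨hyn, hyp⟩ := key y hy.1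
  obtain ⟨hzn, hzp⟩ := key z hz.1
  obtain ⟨hqyn, hqyp⟩ := key (fun n => (q n : ℂ) * y n) hy.2
  obtain ⟨hqzn, hqzp⟩ := key (fun n => (q n : ℂ) * z n) hz.2
  -- the ℕ-indexed sequences
  have huyval : ∀ k : ℕ, ext δ y (-(((k+1:ℕ)):ℤ)) = y (-1 - (k:ℤ)) := by
    intro k
    rw [ext_eq δ y (by omega) (by omega)]
    congr 1
    push_cast; ring
  have huzval : ∀ k : ℕ, ext δ z (-(((k+1:ℕ)):ℤ)) = z (-1 - (k:ℤ)) := by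
    intro k
    rw [ext_eq δ z (by omega) (by omega)]
    congr 1
    push_cast; ring
  have hvyval : ∀ k : ℕ, ext δ y ((((k+1:ℕ)):ℤ) + 1) = y ((k:ℤ) + 2) := by
    intro k
    have h : ((((k+1:ℕ)):ℤ) + 1) = (k:ℤ) + 2 := by push_cast; ring
    rw [h, ext_eq δ y (by omega) (by omega)]
  have hvzval : ∀ k : ℕ, ext δ z ((((k+1:ℕ)):ℤ) + 1) = z ((k:ℤ) + 2) := by
    intro k
    have h : ((((k+1:ℕ)):ℤ) + 1) = (k:ℤ) + 2 := by push_cast; ring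
    rw [h, ext_eq δ z (by omega) (by omega)]
  have hqidxn : ∀ k : ℕ, (-(((k+1:ℕ)):ℤ)) = -1 - (k:ℤ) := by
    intro k; push_cast; ring
  have hqidxp : ∀ k : ℕ, ((((k+1:ℕ)):ℤ) + 1) = (k:ℤ) + 2 := by
    intro k; push_cast; ring
  have huy : Summable fun k : ℕ => ‖ext δ y (-(k:ℤ))‖^2 := by
    refine (summable_nat_add_iff (f := fun k : ℕ => ‖ext δ y (-(k:ℤ))‖^2) 1).1 ?_
    exact hyn.congr (fun k => by rw [huyval k])
  have huz : Summable fun k : ℕ => ‖conj (ext δ z (-(k:ℤ)))‖^2 := by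
    refine (summable_nat_add_iff (f := fun k : ℕ => ‖conj (ext δ z (-(k:ℤ)))‖^2) 1).1 ?_
    refine hzn.congr (fun k => ?_)
    rw [RCLike.norm_conj, huzval k]
  have hvy : Summable fun k : ℕ => ‖ext δ y ((k:ℤ) + 1)‖^2 := by
    refine (summable_nat_add_iff (f := fun k : ℕ => ‖ext δ y ((k:ℤ) + 1)‖^2) 1).1 ?_
    exact hyp.congr (fun k => by rw [hvyval k])
  have hvz : Summable fun k : ℕ => ‖conj (ext δ z ((k:ℤ) + 1))‖^2 := by
    refine (summable_nat_add_iff (f := fun k : ℕ => ‖conj (ext δ z ((k:ℤ) + 1))‖^2) 1).1 ?_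
    refine hzp.congr (fun k => ?_)
    rw [RCLike.norm_conj, hvzval k]
  have hquy : Summable fun k : ℕ =>
      ‖((q (-(((k+1:ℕ)):ℤ)) : ℝ) : ℂ) * ext δ y (-(((k+1:ℕ)):ℤ))‖^2 := by
    refine hqyn.congr (fun k => ?_)
    rw [huyval k, hqidxn k]
  have hqvz : Summable fun k : ℕ =>
      ‖((q ((((k+1:ℕ)):ℤ) + 1) : ℝ) : ℂ) * ext δ y ((((k+1:ℕ)):ℤ) + 1)‖^2 := by
    refine hqyp.congr (fun k => ?_)
    rw [hvyval k, hqidxp k]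
  -- apply the half-line lemmas
  obtain ⟨hHn, hS1n, hS2n, hFn⟩ := neg_half (Complex.exp (-(2 * (δ:ℂ)) * Complex.I)) (e2 δ)
    (fun k => ext δ y (-(k:ℤ))) (fun k => conj (ext δ z (-(k:ℤ))))
    (fun k => ((q (-(k:ℤ)) : ℝ) : ℂ)) huy huz hquy
  obtain ⟨hHp, hS1p, hS2p, hFp⟩ := pos_half (e2 δ) (Complex.exp (-(2 * (δ:ℂ)) * Complex.I))
    (fun k => ext δ y ((k:ℤ) + 1)) (fun k => conj (ext δ z ((k:ℤ) + 1)))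
    (fun k => ((q ((k:ℤ) + 1) : ℝ) : ℂ)) hvy hvz hqvz
  -- summability of each inner product over Z0
  have hsumF1 : Summable (fun n : Z0 => Aop δ q y (n:ℤ) * conj (z (n:ℤ))) := by
    have hn : Summable ((fun n : Z0 => Aop δ q y (n:ℤ) * conj (z (n:ℤ)))
        ∘ (fun x : ↥SnegSet => (x : Z0))) := by
      rw [← Equiv.summable_iff eSneg]
      exact hS1n.congr (fun k => (FnegA_eq δ q y z k).symm)
    have hp : Summable ((fun n : Z0 => Aop δ q y (n:ℤ) * conj (z (n:ℤ)))
        ∘ (fun x : ↥(SnegSetᶜ) => (x : Z0))) := by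
      rw [← Equiv.summable_iff eSpos]
      exact hS1p.congr (fun k => (FposA_eq δ q y z k).symm)
    exact hn.add_compl hp
  have hsumF2 : Summable (fun n : Z0 => y (n:ℤ) * conj (Aop δ q z (n:ℤ))) := by
    have hn : Summable ((fun n : Z0 => y (n:ℤ) * conj (Aop δ q z (n:ℤ)))
        ∘ (fun x : ↥SnegSet => (x : Z0))) := by
      rw [← Equiv.summable_iff eSneg]
      exact hS2n.congr (fun k => (FnegB_eq δ q y z k).symm)
    have hp : Summable ((fun n : Z0 => y (n:ℤ) * conj (Aop δ q z (n:ℤ)))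
        ∘ (fun x : ↥(SnegSetᶜ) => (x : Z0))) := by
      rw [← Equiv.summable_iff eSpos]
      exact hS2p.congr (fun k => (FposB_eq δ q y z k).symm)
    exact hn.add_compl hp
  -- HasSum of the difference over each half
  have hFSn : HasSum ((fun n : Z0 => Aop δ q y (n:ℤ) * conj (z (n:ℤ))
        - y (n:ℤ) * conj (Aop δ q z (n:ℤ))) ∘ (fun x : ↥SnegSet => (x : Z0)))
      ((Complex.exp (-(2 * (δ:ℂ)) * Complex.I) - e2 δ) *
          (∑' k : ℕ, ((ext δ y (-(((k+1:ℕ)):ℤ)) - ext δ y (-(((k+2:ℕ)):ℤ)))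
              * (conj (ext δ z (-(((k+1:ℕ)):ℤ))) - conj (ext δ z (-(((k+2:ℕ)):ℤ))))
            + ((q (-(((k+1:ℕ)):ℤ)) : ℝ) : ℂ) * ext δ y (-(((k+1:ℕ)):ℤ))
              * conj (ext δ z (-(((k+1:ℕ)):ℤ)))))
        - ((Complex.exp (-(2 * (δ:ℂ)) * Complex.I) - e2 δ)/2 *
              ((ext δ y (-((0:ℕ):ℤ)) - ext δ y (-((1:ℕ):ℤ))) * conj (ext δ z (-((1:ℕ):ℤ)))
                + ext δ y (-((1:ℕ):ℤ)) * (conj (ext δ z (-((0:ℕ):ℤ))) - conj (ext δ z (-((1:ℕ):ℤ)))))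
            + (e2 δ + Complex.exp (-(2 * (δ:ℂ)) * Complex.I))/2 *
              (ext δ y (-((0:ℕ):ℤ)) * conj (ext δ z (-((1:ℕ):ℤ)))
                - ext δ y (-((1:ℕ):ℤ)) * conj (ext δ z (-((0:ℕ):ℤ)))))) := by
    rw [← Equiv.hasSum_iff eSneg]
    convert hFn using 1
    funext k
    show Aop δ q y (-1 - (k:ℤ)) * conj (z (-1 - (k:ℤ)))
        - y (-1 - (k:ℤ)) * conj (Aop δ q z (-1 - (k:ℤ))) = _
    rw [FnegA_eq δ q y z k, FnegB_eq δ q y z k]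
  have hFSp : HasSum ((fun n : Z0 => Aop δ q y (n:ℤ) * conj (z (n:ℤ))
        - y (n:ℤ) * conj (Aop δ q z (n:ℤ))) ∘ (fun x : ↥(SnegSetᶜ) => (x : Z0)))
      ((e2 δ - Complex.exp (-(2 * (δ:ℂ)) * Complex.I)) *
          (∑' k : ℕ, ((ext δ y ((((k+1:ℕ)):ℤ) + 1) - ext δ y (((k:ℕ):ℤ) + 1))
              * (conj (ext δ z ((((k+1:ℕ)):ℤ) + 1)) - conj (ext δ z (((k:ℕ):ℤ) + 1)))
            + ((q ((((k+1:ℕ)):ℤ) + 1) : ℝ) : ℂ) * ext δ y ((((k+1:ℕ)):ℤ) + 1)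
              * conj (ext δ z ((((k+1:ℕ)):ℤ) + 1))))
        + ((e2 δ - Complex.exp (-(2 * (δ:ℂ)) * Complex.I))/2 *
              ((ext δ y (((1:ℕ):ℤ) + 1) - ext δ y (((0:ℕ):ℤ) + 1)) * conj (ext δ z (((0:ℕ):ℤ) + 1))
                + ext δ y (((0:ℕ):ℤ) + 1) * (conj (ext δ z (((1:ℕ):ℤ) + 1)) - conj (ext δ z (((0:ℕ):ℤ) + 1))))
            + (e2 δ + Complex.exp (-(2 * (δ:ℂ)) * Complex.I))/2 *
              (ext δ y (((1:ℕ):ℤ) + 1) * conj (ext δ z (((0:ℕ):ℤ) + 1))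
                - ext δ y (((0:ℕ):ℤ) + 1) * conj (ext δ z (((1:ℕ):ℤ) + 1))))) := by
    rw [← Equiv.hasSum_iff eSpos]
    convert hFp using 1
    funext k
    show Aop δ q y ((k:ℤ) + 2) * conj (z ((k:ℤ) + 2))
        - y ((k:ℤ) + 2) * conj (Aop δ q z ((k:ℤ) + 2)) = _
    rw [FposA_eq δ q y z k, FposB_eq δ q y z k]
  have hF := hFSn.add_compl hFSp
  -- rewrite the statement tsums
  have e1 : (∑' n : {m : ℤ // m ≤ -1},
        ((y (n : ℤ) - y ((n : ℤ) - 1)) * conj (z (n : ℤ) - z ((n : ℤ) - 1)) +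
          (q (n : ℤ) : ℂ) * y (n : ℤ) * conj (z (n : ℤ))))
      = ∑' k : ℕ, ((ext δ y (-(((k+1:ℕ)):ℤ)) - ext δ y (-(((k+2:ℕ)):ℤ)))
          * (conj (ext δ z (-(((k+1:ℕ)):ℤ))) - conj (ext δ z (-(((k+2:ℕ)):ℤ))))
        + ((q (-(((k+1:ℕ)):ℤ)) : ℝ) : ℂ) * ext δ y (-(((k+1:ℕ)):ℤ))
          * conj (ext δ z (-(((k+1:ℕ)):ℤ)))) := by
    rw [← Equiv.tsum_eq eNegAll]
    exact tsum_congr (fun k => Hneg_eq δ q y z k)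
  have e2s : (∑' n : {m : ℤ // 2 ≤ m},
        ((ext δ y (n : ℤ) - ext δ y ((n : ℤ) - 1)) *
            conj (ext δ z (n : ℤ) - ext δ z ((n : ℤ) - 1)) +
          (q (n : ℤ) : ℂ) * y (n : ℤ) * conj (z (n : ℤ))))
      = ∑' k : ℕ, ((ext δ y ((((k+1:ℕ)):ℤ) + 1) - ext δ y (((k:ℕ):ℤ) + 1))
          * (conj (ext δ z ((((k+1:ℕ)):ℤ) + 1)) - conj (ext δ z (((k:ℕ):ℤ) + 1)))
        + ((q ((((k+1:ℕ)):ℤ) + 1) : ℝ) : ℂ) * ext δ y ((((k+1:ℕ)):ℤ) + 1)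
          * conj (ext δ z ((((k+1:ℕ)):ℤ) + 1))) := by
    rw [← Equiv.tsum_eq ePosAll]
    exact tsum_congr (fun k => Hpos_eq δ q y z k)
  -- boundary values
  have huy0 : ext δ y (-((0:ℕ):ℤ)) = (1 - e2 δ) * y (-1) + e2 δ * y 2 := by norm_num [ext]
  have huy1 : ext δ y (-((1:ℕ):ℤ)) = y (-1) := by norm_num [ext]
  have huz0 : conj (ext δ z (-((0:ℕ):ℤ)))
      = (1 - Complex.exp (-(2 * (δ:ℂ)) * Complex.I)) * conj (z (-1))
        + Complex.exp (-(2 * (δ:ℂ)) * Complex.I) * conj (z 2) := by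
    norm_num [ext, map_add, map_sub, map_mul, map_one, conj_e2]
  have huz1 : conj (ext δ z (-((1:ℕ):ℤ))) = conj (z (-1)) := by norm_num [ext]
  have hvy0 : ext δ y (((0:ℕ):ℤ) + 1) = y (-1) := by norm_num [ext]
  have hvy1 : ext δ y (((1:ℕ):ℤ) + 1) = y 2 := by norm_num [ext]
  have hvz0 : conj (ext δ z (((0:ℕ):ℤ) + 1)) = conj (z (-1)) := by norm_num [ext]
  have hvz1 : conj (ext δ z (((1:ℕ):ℤ) + 1)) = conj (z 2) := by norm_num [ext]
  have hy0 : ext δ y 0 = (1 - e2 δ) * y (-1) + e2 δ * y 2 := by norm_num [ext]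
  have hz0 : conj (ext δ z 0)
      = (1 - Complex.exp (-(2 * (δ:ℂ)) * Complex.I)) * conj (z (-1))
        + Complex.exp (-(2 * (δ:ℂ)) * Complex.I) * conj (z 2) := by
    norm_num [ext, map_add, map_sub, map_mul, map_one, conj_e2]
  rw [← Summable.tsum_sub hsumF1 hsumF2, hF.tsum_eq, e1, e2s, two_I_sin δ, map_sub, hy0, hz0,
    huy0, huy1, huz0, huz1, hvy0, hvy1, hvz0, hvz1]
  set Sn := ∑' k : ℕ, ((ext δ y (-(((k+1:ℕ)):ℤ)) - ext δ y (-(((k+2:ℕ)):ℤ)))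
      * (conj (ext δ z (-(((k+1:ℕ)):ℤ))) - conj (ext δ z (-(((k+2:ℕ)):ℤ))))
    + ((q (-(((k+1:ℕ)):ℤ)) : ℝ) : ℂ) * ext δ y (-(((k+1:ℕ)):ℤ))
      * conj (ext δ z (-(((k+1:ℕ)):ℤ)))) with hSn
  set Sp := ∑' k : ℕ, ((ext δ y ((((k+1:ℕ)):ℤ) + 1) - ext δ y (((k:ℕ):ℤ) + 1))
      * (conj (ext δ z ((((k+1:ℕ)):ℤ) + 1)) - conj (ext δ z (((k:ℕ):ℤ) + 1)))
    + ((q ((((k+1:ℕ)):ℤ) + 1) : ℝ) : ℂ) * ext δ y ((((k+1:ℕ)):ℤ) + 1)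
      * conj (ext δ z ((((k+1:ℕ)):ℤ) + 1))) with hSp
  ring

/-- for all y, z ∈ D,
⟨Ay, z⟩ − ⟨y, Az⟩ = (1 − e^{−2iδ})(Δy_{−1}) conj(z_{−1}) − (1 − e^{2iδ}) y_{−1} conj(Δz_{−1})
 − 2i sin 2δ ∑_{n ≤ −1} [(∇y_n) conj(∇z_n) + q_n y_n conj(z_n)]
 + 2i sin 2δ ∑_{n ≥ 2} [(∇y_n) conj(∇z_n) + q_n y_n conj(z_n)];
in particular A is Hermitian if δ = 0, and not Hermitian if δ ≠ 0. -/
theorem A_nonhermitian_formula (δ : ℝ) (hδ : 0 ≤ δ ∧ δ < Real.pi / 2) (q : ℤ → ℝ) :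
    (∀ y z : ℤ → ℂ, MemD q y → MemD q z →
      ((∑' n : Z0, Aop δ q y (n : ℤ) * conj (z (n : ℤ))) -
          ∑' n : Z0, y (n : ℤ) * conj (Aop δ q z (n : ℤ))) =
        (1 - Complex.exp (-(2 * (δ : ℂ)) * Complex.I)) * (ext δ y 0 - y (-1)) * conj (z (-1)) -
          (1 - e2 δ) * y (-1) * conj (ext δ z 0 - z (-1)) -
          2 * Complex.I * (Real.sin (2 * δ) : ℂ) *
            (∑' n : {m : ℤ // m ≤ -1},
              ((y (n : ℤ) - y ((n : ℤ) - 1)) * conj (z (n : ℤ) - z ((n : ℤ) - 1)) +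
                (q (n : ℤ) : ℂ) * y (n : ℤ) * conj (z (n : ℤ)))) +
          2 * Complex.I * (Real.sin (2 * δ) : ℂ) *
            (∑' n : {m : ℤ // 2 ≤ m},
              ((ext δ y (n : ℤ) - ext δ y ((n : ℤ) - 1)) *
                  conj (ext δ z (n : ℤ) - ext δ z ((n : ℤ) - 1)) +
                (q (n : ℤ) : ℂ) * y (n : ℤ) * conj (z (n : ℤ))))) ∧
    (δ = 0 → ∀ y z : ℤ → ℂ, MemD q y → MemD q z →
      (∑' n : Z0, Aop δ q y (n : ℤ) * conj (z (n : ℤ))) =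
        ∑' n : Z0, y (n : ℤ) * conj (Aop δ q z (n : ℤ))) ∧
    (δ ≠ 0 → ∃ y z : ℤ → ℂ, MemD q y ∧ MemD q z ∧
      (∑' n : Z0, Aop δ q y (n : ℤ) * conj (z (n : ℤ))) ≠
        ∑' n : Z0, y (n : ℤ) * conj (Aop δ q z (n : ℤ))) := by
  refine ⟨fun y z hy hz => main_formula δ q y z hy hz, ?_, ?_⟩
  · intro h0 y z hy hz
    subst h0
    have h := main_formula 0 q y z hy hz
    norm_num [e2] at h
    exact sub_eq_zero.mp h
  · intro hδ0
    set y : ℤ → ℂ := fun n => if n = -2 then 1 else 0 with hydef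
    set z : ℤ → ℂ := fun n => if n = -1 then 1 else 0 with hzdef
    have hfin : ∀ (w : ℤ → ℂ) (m : Z0), (∀ n : Z0, (n : ℤ) ≠ (m : ℤ) → w (n : ℤ) = 0) →
        MemD q w := by
      intro w m hw
      constructor <;>
      · apply summable_of_ne_finset_zero (s := {m})
        intro n hn
        have hne : (n : ℤ) ≠ (m : ℤ) := by
          simp only [Finset.mem_singleton] at hn
          exact fun hc => hn (Subtype.ext hc)
        simp [hw n hne]
    have hyD : MemD q y := by
      refine hfin y ⟨-2, by norm_num⟩ ?_
      intro n hne
      simp only [hydef]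
      rw [if_neg hne]
    have hzD : MemD q z := by
      refine hfin z ⟨-1, by norm_num⟩ ?_
      intro n hne
      simp only [hzdef]
      rw [if_neg hne]
    refine ⟨y, z, hyD, hzD, ?_⟩
    have h := main_formula δ q y z hyD hzD
    -- compute the right-hand side
    have hsin : Real.sin (2 * δ) ≠ 0 := by
      have h1 : 0 < 2 * δ := by
        rcases lt_or_eq_of_le hδ.1 with h | h
        · linarith
        · exact absurd h.symm hδ0
      have h2 : 2 * δ < Real.pi := by
        have := hδ.2
        linarith
      exact ne_of_gt (Real.sin_pos_of_pos_of_lt_pi h1 h2)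
    have hy2 : y 2 = 0 := by norm_num [hydef]
    have hym1 : y (-1) = 0 := by norm_num [hydef]
    have hym2 : y (-2) = 1 := by norm_num [hydef]
    have hzm1 : z (-1) = 1 := by norm_num [hzdef]
    have hexty0 : ext δ y 0 = 0 := by
      simp [ext, hym1, hy2]
    have hSn : (∑' n : {m : ℤ // m ≤ -1},
        ((y (n : ℤ) - y ((n : ℤ) - 1)) * conj (z (n : ℤ) - z ((n : ℤ) - 1)) +
          (q (n : ℤ) : ℂ) * y (n : ℤ) * conj (z (n : ℤ)))) = -1 := by
      rw [tsum_eq_single (⟨-1, by norm_num⟩ : {m : ℤ // m ≤ -1}) ?_]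
      · norm_num [hydef, hzdef]
      · rintro ⟨n, hn⟩ hne
        have hn1 : n ≠ -1 := by
          intro hc
          exact hne (Subtype.ext hc)
        have hz1 : z n = 0 := by simp only [hzdef]; rw [if_neg hn1]
        have hz2 : z (n - 1) = 0 := by
          simp only [hzdef]
          rw [if_neg (by omega : n - 1 ≠ -1)]
        simp [hz1, hz2]
    have hSp : (∑' n : {m : ℤ // 2 ≤ m},
        ((ext δ y (n : ℤ) - ext δ y ((n : ℤ) - 1)) *
            conj (ext δ z (n : ℤ) - ext δ z ((n : ℤ) - 1)) +
          (q (n : ℤ) : ℂ) * y (n : ℤ) * conj (z (n : ℤ)))) = 0 := by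
      have hexty : ∀ k : ℤ, 1 ≤ k → ext δ y k = 0 := by
        intro k hk
        by_cases h1 : k = 1
        · subst h1
          simp [ext, hym1]
        · rw [ext_eq δ y (by omega) h1]
          simp only [hydef]
          rw [if_neg (by omega : k ≠ -2)]
      have hall : ∀ n : {m : ℤ // 2 ≤ m},
          ((ext δ y (n : ℤ) - ext δ y ((n : ℤ) - 1)) *
              conj (ext δ z (n : ℤ) - ext δ z ((n : ℤ) - 1)) +
            (q (n : ℤ) : ℂ) * y (n : ℤ) * conj (z (n : ℤ))) = 0 := by
        rintro ⟨n, hn⟩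
        have h1 : ext δ y n = 0 := hexty n (by omega)
        have h2 : ext δ y (n - 1) = 0 := hexty (n - 1) (by omega)
        have h3 : y n = 0 := by simp only [hydef]; rw [if_neg (by omega : n ≠ -2)]
        simp [h1, h2, h3]
      calc _ = ∑' n : {m : ℤ // 2 ≤ m}, (0 : ℂ) := tsum_congr hall
        _ = 0 := tsum_zero
    rw [hSn, hSp, hexty0, hym1, hzm1] at h
    have hval : ((∑' n : Z0, Aop δ q y (n : ℤ) * conj (z (n : ℤ))) -
        ∑' n : Z0, y (n : ℤ) * conj (Aop δ q z (n : ℤ)))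
        = 2 * Complex.I * (Real.sin (2 * δ) : ℂ) := by
      rw [h]
      ring_nf
    intro hcontra
    rw [hcontra, sub_self] at hval
    have : (Real.sin (2 * δ) : ℂ) ≠ 0 := Complex.ofReal_ne_zero.mpr hsin
    exact (mul_ne_zero (mul_ne_zero two_ne_zero Complex.I_ne_zero) this) hval.symm
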